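/- Let N ≥ 1, let G be a closed subgroup of U_N, let I ⊆ {1,…,N} be nonempty, let e = (e_1,…,e_l) and f = (f_1,…,f_k) be words with letters in {∘,•}, and let T be a complex matrix with rows indexed by {1,…,N}^l and columns indexed by {1,…,N}^k such that T g^{⊗f} = g^{⊗e} T for every g ∈ G. Then for every point x in the orbit G·ξ_I = {g ξ_I : g ∈ G} ⊆ ℂ^N one has Σ_{i∈{1,…,N}^l} Σ_{j∈{1,…,N}^k} T_{i,j} · (∏_{a=1}^l x_{i_a}^{ē_a}) · (∏_{b=1}^k conj(x_{j_b}^{f̄_b})) = |I|^{-(k+l)/2} Σ_{r∈I^l} Σ_{s∈I^k} T_{r,s}, where for a scalar x, x^∘ = x and x^• = conj(x), and ē, f̄ are obtained from e, f by exchanging ∘ and •. -/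
import Mathlib


open Matrix

/-- `x^∘ = x` and `x^• = conj x`, for a scalar `x` (here `true` encodes `•`). -/
noncomputable def dec (b : Bool) (z : ℂ) : ℂ := if b then (starRingEnd ℂ) z else z

/-- The decorated tensor power `g^{⊗e}` of a matrix `g ∈ M_N(ℂ)`, for a word `e` with letters
in `{∘,•}` (here `true` encodes `•`): the matrix with entries `∏_a g_{i_a j_a}^{e_a}`. -/
noncomputable def decPow {N k : ℕ} (e : Fin k → Bool) (g : Matrix (Fin N) (Fin N) ℂ) :
    Matrix (Fin k → Fin N) (Fin k → Fin N) ℂ :=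
  Matrix.of fun i j => ∏ a, dec (e a) (g (i a) (j a))

/-- The unit vector `ξ_I ∈ ℂ^N`, with coordinates `1/√|I|` on `I` and `0` elsewhere. -/
noncomputable def xiI (N : ℕ) (I : Finset (Fin N)) : Fin N → ℂ :=
  fun i => if i ∈ I then ((1 / Real.sqrt I.card : ℝ) : ℂ) else 0

lemma dec_mul (b : Bool) (z w : ℂ) : dec b (z * w) = dec b z * dec b w := by
  cases b <;> simp [dec]

lemma dec_sum {α : Type*} (b : Bool) (s : Finset α) (h : α → ℂ) :
    dec b (∑ x ∈ s, h x) = ∑ x ∈ s, dec b (h x) := by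
  cases b <;> simp [dec]

lemma star_dec (b : Bool) (z : ℂ) : (starRingEnd ℂ) (dec b z) = dec (!b) z := by
  cases b <;> simp [dec]

lemma dec_conj (b : Bool) (z : ℂ) : dec b ((starRingEnd ℂ) z) = dec (!b) z := by
  cases b <;> simp [dec]

lemma dec_xiI (b : Bool) {N : ℕ} (I : Finset (Fin N)) (p : Fin N) :
    dec b (xiI N I p) = xiI N I p := by
  unfold xiI; split <;> cases b <;> simp [dec]

lemma decPow_mul {N k : ℕ} (w : Fin k → Bool) (A B : Matrix (Fin N) (Fin N) ℂ) :
    decPow w (A * B) = decPow w A * decPow w B := by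
  ext i j
  simp only [decPow, Matrix.mul_apply, Matrix.of_apply]
  simp only [dec_sum, dec_mul]
  rw [Finset.prod_univ_sum]
  simp only [Fintype.piFinset_univ]
  exact Finset.sum_congr rfl fun m _ => Finset.prod_mul_distrib

lemma decPow_one {N k : ℕ} (w : Fin k → Bool) :
    decPow (N := N) w 1 = 1 := by
  ext i j
  simp only [decPow, Matrix.of_apply, Matrix.one_apply]
  by_cases h : i = j
  · subst h; simp [dec]
  · obtain ⟨a, ha⟩ : ∃ a, i a ≠ j a := by
      by_contra hc; push_neg at hc; exact h (funext hc)
    rw [if_neg h]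
    exact Finset.prod_eq_zero (Finset.mem_univ a) (by simp [Matrix.one_apply, ha, dec])

lemma decPow_transpose {N k : ℕ} (w : Fin k → Bool) (g : Matrix (Fin N) (Fin N) ℂ) :
    (decPow (fun a => !(w a)) g)ᵀ = decPow w (star g) := by
  ext i j
  simp only [decPow, Matrix.transpose_apply, Matrix.of_apply, Matrix.star_apply]
  congr 1; funext a
  have : star (g (j a) (i a)) = (starRingEnd ℂ) (g (j a) (i a)) := rfl
  rw [this, dec_conj]

/-- Expanding a decorated product of coordinates of `g *ᵥ ξ_I`. -/
lemma prodDec {N m : ℕ} (I : Finset (Fin N)) (g : Matrix (Fin N) (Fin N) ℂ)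
    (w : Fin m → Bool) (i : Fin m → Fin N) :
    ∏ a, dec (w a) ((g *ᵥ xiI N I) (i a)) =
      ∑ r : Fin m → Fin N,
        (∏ a, dec (w a) (g (i a) (r a))) * ∏ a, xiI N I (r a) := by
  have : ∀ a : Fin m, dec (w a) ((g *ᵥ xiI N I) (i a))
      = ∑ p : Fin N, dec (w a) (g (i a) p) * xiI N I p := by
    intro a
    simp only [Matrix.mulVec, dotProduct, dec_sum, dec_mul, dec_xiI]
  rw [Finset.prod_congr rfl fun a _ => this a, Finset.prod_univ_sum]
  simp only [Fintype.piFinset_univ]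
  exact Finset.sum_congr rfl fun r _ => Finset.prod_mul_distrib

/-- Sum against the tensor power of `ξ_I` reduces to a sum over `I`-tuples. -/
lemma sum_xi_mul {N m : ℕ} (I : Finset (Fin N)) (h : (Fin m → Fin N) → ℂ) :
    ∑ r : Fin m → Fin N, (∏ a, xiI N I (r a)) * h r
      = ((1 / Real.sqrt I.card : ℝ) : ℂ) ^ m *
          ∑ r : Fin m → {y // y ∈ I}, h (fun a => (r a : Fin N)) := by
  rw [← Finset.sum_subset (Finset.subset_univ (Fintype.piFinset fun _ : Fin m => I))
    (by
      intro r _ hr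
      rw [Fintype.mem_piFinset] at hr
      push_neg at hr
      obtain ⟨a, ha⟩ := hr
      rw [Finset.prod_eq_zero (Finset.mem_univ a) (by simp [xiI, ha]), zero_mul])]
  rw [Finset.mul_sum]
  refine Finset.sum_bij' (fun r hr => fun a => (⟨r a, Fintype.mem_piFinset.mp hr a⟩ : {y // y ∈ I}))
    (fun q _ => fun a => (q a : Fin N)) (fun r hr => Finset.mem_univ _)
    (fun q _ => Fintype.mem_piFinset.mpr fun a => (q a).2) (fun r hr => rfl)
    (fun q _ => by funext a; exact Subtype.ext rfl) ?_
  intro r hr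
  have hmem := Fintype.mem_piFinset.mp hr
  have hx : ∀ a : Fin m, xiI N I (r a) = ((1 / Real.sqrt I.card : ℝ) : ℂ) :=
    fun a => by simp [xiI, hmem a]
  rw [Finset.prod_congr rfl fun a _ => hx a, Finset.prod_const, Finset.card_univ,
    Fintype.card_fin]

/-- Classical case of Theorem 2.5: for any intertwiner `T g^{⊗f} = g^{⊗e} T` (`g ∈ G`), every
point `x` of the orbit `G·ξ_I` satisfies
`Σ_i Σ_j T_{i,j} (∏_a x_{i_a}^{ē_a}) (∏_b conj(x_{j_b}^{f̄_b})) = |I|^{-(k+l)/2} Σ_{r∈I^l} Σ_{s∈I^k} T_{r,s}`,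
where `ē`, `f̄` are obtained from `e`, `f` by exchanging `∘` and `•`. -/
theorem stmt9 (N : ℕ) (hN : 1 ≤ N) (G : Subgroup (Matrix.unitaryGroup (Fin N) ℂ))
    (hG : IsClosed (G : Set (Matrix.unitaryGroup (Fin N) ℂ)))
    (I : Finset (Fin N)) (hI : I.Nonempty)
    (l k : ℕ) (e : Fin l → Bool) (f : Fin k → Bool)
    (T : Matrix (Fin l → Fin N) (Fin k → Fin N) ℂ)
    (hT : ∀ g ∈ G, T * decPow f ((g : Matrix.unitaryGroup (Fin N) ℂ) : Matrix (Fin N) (Fin N) ℂ)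
      = decPow e ((g : Matrix.unitaryGroup (Fin N) ℂ) : Matrix (Fin N) (Fin N) ℂ) * T) :
    ∀ x : Fin N → ℂ, (∃ g ∈ G, ((g : Matrix (Fin N) (Fin N) ℂ)) *ᵥ xiI N I = x) →
      ∑ i : Fin l → Fin N, ∑ j : Fin k → Fin N,
          T i j * (∏ a, dec (!(e a)) (x (i a))) *
            ∏ b, (starRingEnd ℂ) (dec (!(f b)) (x (j b))) =
        ((1 / Real.sqrt ((I.card : ℝ) ^ (k + l)) : ℝ) : ℂ) *
          ∑ r : Fin l → {y // y ∈ I}, ∑ s : Fin k → {y // y ∈ I},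
            T (fun a => (r a : Fin N)) (fun b => (s b : Fin N)) := by
  rintro x ⟨g, hg, rfl⟩
  set gm : Matrix (Fin N) (Fin N) ℂ := ((g : Matrix.unitaryGroup (Fin N) ℂ) : Matrix (Fin N) (Fin N) ℂ) with hgm
  set P : Matrix (Fin l → Fin N) (Fin l → Fin N) ℂ := decPow (fun a => !(e a)) gm with hP
  set Q : Matrix (Fin k → Fin N) (Fin k → Fin N) ℂ := decPow f gm with hQ
  set Ξl : (Fin l → Fin N) → ℂ := fun r => ∏ a, xiI N I (r a) with hXl
  set Ξk : (Fin k → Fin N) → ℂ := fun s => ∏ b, xiI N I (s b) with hXk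
  -- the key intertwiner computation
  have hM : Pᵀ * T * Q = T := by
    have hTinv := hT g⁻¹ (G.inv_mem hg)
    have hcoe : ((g⁻¹ : Matrix.unitaryGroup (Fin N) ℂ) : Matrix (Fin N) (Fin N) ℂ) = star gm := rfl
    rw [hcoe] at hTinv
    rw [hP, decPow_transpose, ← hTinv, Matrix.mul_assoc, hQ, ← decPow_mul,
      Matrix.UnitaryGroup.star_mul_self, decPow_one, Matrix.mul_one]
  -- the left-hand side as a dot product
  have hLHS : ∑ i : Fin l → Fin N, ∑ j : Fin k → Fin N,
      T i j * (∏ a, dec (!(e a)) ((gm *ᵥ xiI N I) (i a))) *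
        ∏ b, (starRingEnd ℂ) (dec (!(f b)) ((gm *ᵥ xiI N I) (j b)))
      = (P *ᵥ Ξl) ⬝ᵥ (T *ᵥ (Q *ᵥ Ξk)) := by
    have hu : ∀ i, (∏ a, dec (!(e a)) ((gm *ᵥ xiI N I) (i a))) = (P *ᵥ Ξl) i := by
      intro i
      rw [prodDec]
      rfl
    have hw : ∀ j, (∏ b, (starRingEnd ℂ) (dec (!(f b)) ((gm *ᵥ xiI N I) (j b)))) = (Q *ᵥ Ξk) j := by
      intro j
      have : ∀ b : Fin k, (starRingEnd ℂ) (dec (!(f b)) ((gm *ᵥ xiI N I) (j b)))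
          = dec (f b) ((gm *ᵥ xiI N I) (j b)) := by
        intro b; rw [star_dec, Bool.not_not]
      rw [Finset.prod_congr rfl fun b _ => this b, prodDec]
      rfl
    simp only [dotProduct, Matrix.mulVec]
    calc ∑ i : Fin l → Fin N, ∑ j : Fin k → Fin N,
          T i j * (∏ a, dec (!(e a)) ((gm *ᵥ xiI N I) (i a))) *
            ∏ b, (starRingEnd ℂ) (dec (!(f b)) ((gm *ᵥ xiI N I) (j b)))
        = ∑ i : Fin l → Fin N, ∑ j : Fin k → Fin N,
            T i j * (P *ᵥ Ξl) i * (Q *ᵥ Ξk) j := by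
          refine Finset.sum_congr rfl fun i _ => Finset.sum_congr rfl fun j _ => ?_
          rw [hu i, hw j]
      _ = ∑ i : Fin l → Fin N, (P *ᵥ Ξl) i * ∑ j : Fin k → Fin N, T i j * (Q *ᵥ Ξk) j := by
          refine Finset.sum_congr rfl fun i _ => ?_
          rw [Finset.mul_sum]
          exact Finset.sum_congr rfl fun j _ => by ring
      _ = _ := by
          simp only [Matrix.mulVec, dotProduct]
  rw [hLHS]
  have hdot : (P *ᵥ Ξl) ⬝ᵥ (T *ᵥ (Q *ᵥ Ξk)) = Ξl ⬝ᵥ (T *ᵥ Ξk) := by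
    have hPv : P *ᵥ Ξl = Ξl ᵥ* Pᵀ := (Matrix.vecMul_transpose _ _).symm
    rw [Matrix.dotProduct_mulVec, Matrix.dotProduct_mulVec, hPv,
      Matrix.vecMul_vecMul, Matrix.vecMul_vecMul, ← Matrix.mul_assoc, hM,
      ← Matrix.dotProduct_mulVec]
  rw [hdot]
  have expand : Ξl ⬝ᵥ (T *ᵥ Ξk)
      = ∑ r : Fin l → Fin N, (∏ a, xiI N I (r a)) *
          ∑ s : Fin k → Fin N, (∏ b, xiI N I (s b)) * T r s := by
    simp only [dotProduct, Matrix.mulVec, hXl, hXk]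
    refine Finset.sum_congr rfl fun r _ => ?_
    congr 1
    exact Finset.sum_congr rfl fun s _ => mul_comm _ _
  rw [expand, sum_xi_mul]
  have inner : ∀ r : Fin l → {y // y ∈ I},
      (∑ s : Fin k → Fin N, (∏ b, xiI N I (s b)) * T (fun a => (r a : Fin N)) s)
        = ((1 / Real.sqrt I.card : ℝ) : ℂ) ^ k *
          ∑ s : Fin k → {y // y ∈ I}, T (fun a => (r a : Fin N)) (fun b => (s b : Fin N)) :=
    fun r => sum_xi_mul I _
  rw [Finset.sum_congr rfl fun r _ => inner r, ← Finset.mul_sum, ← mul_assoc]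
  congr 1
  have h0 : (0:ℝ) ≤ (I.card : ℝ) := Nat.cast_nonneg _
  have hs : Real.sqrt ((I.card : ℝ) ^ (k + l)) = Real.sqrt (I.card : ℝ) ^ (k + l) := by
    rw [show ((I.card : ℝ)) ^ (k + l) = (Real.sqrt (I.card : ℝ) ^ (k + l)) ^ 2 by
        rw [← pow_mul, mul_comm (k + l) 2, pow_mul, Real.sq_sqrt h0],
      Real.sqrt_sq (pow_nonneg (Real.sqrt_nonneg _) _)]
  rw [hs]
  push_cast
  rw [div_pow, div_pow, one_pow, one_pow, div_mul_div_comm, one_mul, ← pow_add, Nat.add_comm l k]
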